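/- For every (x,y) ∈ ℝ^d × ℝ^d there exists a unique extremal sequence (x_n)_{n∈ℤ} with x_0 = x and x_1 = y. -/

import Mathlib

noncomputable section

/-- Configuration space `ℝ^d` with the Euclidean norm. -/
abbrev Ed (d : ℕ) := EuclideanSpace ℝ (Fin d)

/-- The point of `ℝ^d` with integer coordinates given by `r ∈ ℤ^d`. -/
def intVec (d : ℕ) (r : Fin d → ℤ) : Ed d := WithLp.toLp 2 (fun i => (r i : ℝ))

/-- A generating function: a `C²` map `S : ℝ^d × ℝ^d → ℝ` which is `ℤ^d`-periodic for
the diagonal action and satisfies the uniform twist condition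
`∑_{i,j} ∂²S/∂xᵢ∂yⱼ (x,y) ξᵢ ξⱼ ≤ -A‖ξ‖²` (expressed via the second derivative of `S`
applied to `((ξ,0),(0,ξ))`). -/
def IsGenFn {d : ℕ} (S : Ed d × Ed d → ℝ) : Prop :=
  ContDiff ℝ 2 S ∧
  (∀ (r : Fin d → ℤ) (x y : Ed d), S (x + intVec d r, y + intVec d r) = S (x, y)) ∧
  ∃ A : ℝ, 0 < A ∧ ∀ (x y ξ : Ed d),
    iteratedFDeriv ℝ 2 S (x, y) ![(ξ, 0), (0, ξ)] ≤ -A * ‖ξ‖ ^ 2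

/-- `∂₁S`, the partial differential of `S` with respect to its first variable. -/
def D1 {d : ℕ} (S : Ed d × Ed d → ℝ) (x y : Ed d) : Ed d →L[ℝ] ℝ :=
  fderiv ℝ (fun z => S (z, y)) x

/-- `∂₂S`, the partial differential of `S` with respect to its second variable. -/
def D2 {d : ℕ} (S : Ed d × Ed d → ℝ) (x y : Ed d) : Ed d →L[ℝ] ℝ :=
  fderiv ℝ (fun z => S (x, z)) y

/-- A bi-infinite sequence `(x_n)_{n∈ℤ}` is extremal if
`∂₂S(x_{n-1}, x_n) + ∂₁S(x_n, x_{n+1}) = 0` for every `n`. -/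
def IsExtremal {d : ℕ} (S : Ed d × Ed d → ℝ) (u : ℤ → Ed d) : Prop :=
  ∀ n : ℤ, D2 S (u (n - 1)) (u n) + D1 S (u n) (u (n + 1)) = 0

/-- The action `S(x_0, …, x_n)` of a finite sequence. -/
def act {d : ℕ} (S : Ed d × Ed d → ℝ) (n : ℕ) (γ : ℕ → Ed d) : ℝ :=
  ∑ k ∈ Finset.range n, S (γ k, γ (k + 1))

/-- The sequence `(x, z_1, …, z_{N-1}, y)` built from interior points `z`. -/
def path {d : ℕ} (x y : Ed d) (N : ℕ) (z : Fin (N - 1) → Ed d) : ℕ → Ed d :=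
  fun k => if h0 : k = 0 then x else if h : k < N then z ⟨k - 1, by omega⟩ else y

/-- The fixed-endpoint action `S_{x,y,N} : (x_1, …, x_{N-1}) ↦ S(x, x_1, …, x_{N-1}, y)`. -/
def fixedAct {d : ℕ} (S : Ed d × Ed d → ℝ) (x y : Ed d) (N : ℕ) :
    (Fin (N - 1) → Ed d) → ℝ :=
  fun z => act S N (path x y N z)

/-- `S` has no conjugate points: for all `x, y` and `N ≥ 2`, the fixed-endpoint action
`S_{x,y,N}` has exactly one critical point, and attains its global minimum there. -/
def NoConjPts {d : ℕ} (S : Ed d × Ed d → ℝ) : Prop :=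
  ∀ (x y : Ed d) (N : ℕ), 2 ≤ N →
    ∃ z : Fin (N - 1) → Ed d,
      fderiv ℝ (fixedAct S x y N) z = 0 ∧
      (∀ w, fixedAct S x y N z ≤ fixedAct S x y N w) ∧
      (∀ z', fderiv ℝ (fixedAct S x y N) z' = 0 → z' = z)

/-- `A_N(x,y)`: the minimum of the fixed-endpoint action `S_{x,y,N}` for `N ≥ 2`,
and `S(x,y)` for `N = 1`. -/
def AN {d : ℕ} (S : Ed d × Ed d → ℝ) (N : ℕ) (x y : Ed d) : ℝ :=
  if N ≤ 1 then S (x, y) else sInf (Set.range (fixedAct S x y N))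

/-- The minimizing holonomic value `Σ̃(S)`. -/
def holVal {d : ℕ} (S : Ed d × Ed d → ℝ) : ℝ :=
  sInf { v : ℝ | ∃ n : ℕ, 1 ≤ n ∧ ∃ γ : ℕ → Ed d,
    (∃ r : Fin d → ℤ, γ n - γ 0 = intVec d r) ∧ v = act S n γ / n }

/-- The normalized action `S̃(x_0, …, x_n) = S(x_0, …, x_n) - n Σ̃(S)`. -/
def actTilde {d : ℕ} (S : Ed d × Ed d → ℝ) (n : ℕ) (γ : ℕ → Ed d) : ℝ :=
  act S n γ - n * holVal S

/-- The Mañé potential `π(x,y)`. -/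
def manePot {d : ℕ} (S : Ed d × Ed d → ℝ) (x y : Ed d) : ℝ :=
  sInf { v : ℝ | ∃ n : ℕ, 1 ≤ n ∧ ∃ γ : ℕ → Ed d,
    γ 0 = x ∧ (∃ r : Fin d → ℤ, γ n - y = intVec d r) ∧ v = actTilde S n γ }

/-- The Aubry set `Ā(S) ⊂ ℝ^d × ℝ^d`. -/
def aubry {d : ℕ} (S : Ed d × Ed d → ℝ) : Set (Ed d × Ed d) :=
  { p | ∀ ε > 0, ∃ n : ℕ, 1 ≤ n ∧ ∃ γ : ℕ → Ed d,
      (∃ r : Fin d → ℤ, γ n - γ 0 = intVec d r) ∧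
      ‖p.1 - γ 0‖ < ε ∧ ‖p.2 - γ 1‖ < ε ∧ actTilde S n γ < ε }

/-- The generating function `S_c(x,y) = S(x,y) + c(x - y)` associated to a cohomology
class `c ∈ (ℝ^d)*`. -/
def Sc {d : ℕ} (S : Ed d × Ed d → ℝ) (c : Ed d →L[ℝ] ℝ) : Ed d × Ed d → ℝ :=
  fun p => S p + c (p.1 - p.2)


section AuxExtremal
open Function Set ContinuousLinearMap
open scoped RealInnerProductSpace


theorem bij_of_mono {d : ℕ} {A : ℝ} (hA : 0 < A) (f : Ed d → Ed d) (hf : ContDiff ℝ 1 f)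
    (hder : ∀ z η, ⟪fderiv ℝ f z η, η⟫ ≤ -A * ‖η‖ ^ 2) : Function.Bijective f := by
  -- global monotonicity
  have mono : ∀ a b : Ed d, ⟪f a - f b, a - b⟫ ≤ -A * ‖a - b‖ ^ 2 := by
    intro a b
    set ξ := a - b with hξ
    have key : ⟪f (b + ξ), ξ⟫ + A * 1 * ‖ξ‖ ^ 2 ≤ ⟪f (b + 0 • ξ), ξ⟫ + A * 0 * ‖ξ‖ ^ 2 := by
      set g : ℝ → ℝ := fun t => ⟪f (b + t • ξ), ξ⟫ + A * t * ‖ξ‖ ^ 2 with hg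
      have hd : ∀ t : ℝ, HasDerivAt g (⟪fderiv ℝ f (b + t • ξ) ξ, ξ⟫ + A * ‖ξ‖ ^ 2) t := by
        intro t
        have h1 : HasDerivAt (fun t : ℝ => b + t • ξ) ξ t := by
          simpa using ((hasDerivAt_id t).smul_const ξ).const_add b
        have h2 : HasFDerivAt f (fderiv ℝ f (b + t • ξ)) (b + t • ξ) :=
          (hf.differentiable one_ne_zero _).hasFDerivAt
        have h3 : HasDerivAt (fun t : ℝ => f (b + t • ξ)) (fderiv ℝ f (b + t • ξ) ξ) t :=
          h2.comp_hasDerivAt t h1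
        have h4 : HasDerivAt (fun t : ℝ => ⟪f (b + t • ξ), ξ⟫)
            ⟪fderiv ℝ f (b + t • ξ) ξ, ξ⟫ t := by
          simpa using h3.inner ℝ (hasDerivAt_const t ξ)
        have h5 : HasDerivAt (fun t : ℝ => A * t * ‖ξ‖ ^ 2) (A * ‖ξ‖ ^ 2) t := by
          simpa [mul_comm, mul_assoc] using
            ((hasDerivAt_id t).const_mul A).mul_const (‖ξ‖ ^ 2)
        exact h4.add h5
      have hanti : AntitoneOn g (Set.Icc 0 1) := by
        apply antitoneOn_of_deriv_nonpos (convex_Icc 0 1)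
        · exact (fun t _ => (hd t).differentiableAt.continuousAt.continuousWithinAt)
        · intro t ht
          exact ((hd t).differentiableAt).differentiableWithinAt
        · intro t ht
          rw [(hd t).deriv]
          have := hder (b + t • ξ) ξ
          nlinarith [this]
      have := hanti (Set.left_mem_Icc.2 one_pos.le) (Set.right_mem_Icc.2 one_pos.le) one_pos.le
      simpa [hg] using this
    have hb0 : b + 0 • ξ = b := by simp
    have hba : b + ξ = a := by rw [hξ]; abel
    rw [hb0, hba] at key
    have : ⟪f a, ξ⟫ - ⟪f b, ξ⟫ ≤ -A * ‖ξ‖ ^ 2 := by nlinarith [key]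
    rw [inner_sub_left]; exact this
  -- anti-lipschitz
  have alip : ∀ a b : Ed d, A * ‖a - b‖ ≤ ‖f a - f b‖ := by
    intro a b
    rcases eq_or_ne a b with h | h
    · simp [h]
    · have h1 : A * ‖a - b‖ ^ 2 ≤ ⟪f b - f a, a - b⟫ := by
        have := mono a b
        have : ⟪f b - f a, a - b⟫ = -⟪f a - f b, a - b⟫ := by
          rw [← inner_neg_left]; congr 1; abel
        nlinarith [mono a b]
      have h2 : ⟪f b - f a, a - b⟫ ≤ ‖f b - f a‖ * ‖a - b‖ := real_inner_le_norm _ _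
      have h3 : 0 < ‖a - b‖ := by
        rw [norm_pos_iff]; exact sub_ne_zero_of_ne h
      have : A * ‖a - b‖ ^ 2 ≤ ‖f b - f a‖ * ‖a - b‖ := h1.trans h2
      have h4 : ‖f b - f a‖ = ‖f a - f b‖ := by rw [← norm_neg]; congr 1; abel
      rw [h4] at this
      nlinarith
  have hinj : Function.Injective f := by
    intro a b hab
    have := alip a b
    rw [hab, sub_self, norm_zero] at this
    have : ‖a - b‖ ≤ 0 := by nlinarith
    have : a - b = 0 := by
      have := norm_nonneg (a - b); rw [← norm_eq_zero]; linarith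
    exact sub_eq_zero.mp this
  refine ⟨hinj, ?_⟩
  -- surjectivity: range is clopen & nonempty in a connected space
  have hcont : Continuous f := hf.continuous
  have hclosed : IsClosed (Set.range f) := by
    rw [← closure_subset_iff_isClosed]
    intro y hy
    obtain ⟨u, hu, hlim⟩ := mem_closure_iff_seq_limit.mp hy
    choose z hz using hu
    have hcu : CauchySeq u := hlim.cauchySeq
    have hcz : CauchySeq z := by
      rw [Metric.cauchySeq_iff] at hcu ⊢
      intro ε hε
      obtain ⟨N, hN⟩ := hcu (A * ε) (by positivity)
      refine ⟨N, fun m hm n hn => ?_⟩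
      have h1 := hN m hm n hn
      have h2 := alip (z m) (z n)
      rw [hz m, hz n] at h2
      rw [dist_eq_norm] at h1 ⊢
      nlinarith
    obtain ⟨l, hl⟩ := cauchySeq_tendsto_of_complete hcz
    have : Filter.Tendsto (fun n => f (z n)) Filter.atTop (nhds (f l)) :=
      (hcont.continuousAt).tendsto.comp hl
    have heq : f l = y := by
      apply tendsto_nhds_unique _ hlim
      simpa [hz] using this
    exact ⟨l, heq⟩
  have hopen : IsOpenMap f := by
    have hequiv : ∀ z : Ed d, ∃ e : Ed d ≃L[ℝ] Ed d, (e : Ed d →L[ℝ] Ed d) = fderiv ℝ f z := by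
      intro z
      have hlin : Function.Injective (fderiv ℝ f z) := by
        intro η₁ η₂ hη
        have h0 : fderiv ℝ f z (η₁ - η₂) = 0 := by
          rw [map_sub, hη, sub_self]
        have := hder z (η₁ - η₂)
        rw [h0, inner_zero_left] at this
        have h1 : ‖η₁ - η₂‖ ^ 2 ≤ 0 := by nlinarith
        have h2 : η₁ - η₂ = 0 := by
          rw [← norm_eq_zero]; nlinarith [norm_nonneg (η₁ - η₂), sq_nonneg ‖η₁ - η₂‖]
        exact sub_eq_zero.mp h2
      have hbij : Function.Bijective ((fderiv ℝ f z) : Ed d →ₗ[ℝ] Ed d) :=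
        ⟨hlin, LinearMap.injective_iff_surjective.mp hlin⟩
      let e := LinearEquiv.ofBijective ((fderiv ℝ f z) : Ed d →ₗ[ℝ] Ed d) hbij
      refine ⟨e.toContinuousLinearEquiv, ?_⟩
      ext η; rfl
    choose e he using hequiv
    apply isOpenMap_of_hasStrictFDerivAt_equiv (f' := e)
    intro z
    rw [he z]
    exact (hf.contDiffAt).hasStrictFDerivAt one_ne_zero
  have hclopen : IsClopen (Set.range f) := ⟨hclosed, hopen.isOpen_range⟩
  have : Set.range f = Set.univ := by
    rcases isClopen_iff.mp hclopen with h | h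
    · exact absurd h (Set.range_nonempty f).ne_empty
    · exact h
  exact Set.range_eq_univ.mp this


variable {d : ℕ} {S : Ed d × Ed d → ℝ} {A : ℝ}

theorem D1_eq (hS : ContDiff ℝ 2 S) (x y : Ed d) :
    D1 S x y = (fderiv ℝ S (x, y)).comp (inl ℝ (Ed d) (Ed d)) := by
  have h := ((hS.differentiable (by norm_num) (x, y)).hasFDerivAt.comp x
    (hasFDerivAt_prodMk_left (𝕜 := ℝ) x y))
  exact h.fderiv

theorem D2_eq (hS : ContDiff ℝ 2 S) (x y : Ed d) :
    D2 S x y = (fderiv ℝ S (x, y)).comp (inr ℝ (Ed d) (Ed d)) := by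
  have h := ((hS.differentiable (by norm_num) (x, y)).hasFDerivAt.comp y
    (hasFDerivAt_prodMk_right x y))
  exact h.fderiv

def T1 (d : ℕ) : ((Ed d × Ed d) →L[ℝ] ℝ) →L[ℝ] (Ed d →L[ℝ] ℝ) :=
  (ContinuousLinearMap.compL ℝ (Ed d) (Ed d × Ed d) ℝ).flip (inl ℝ (Ed d) (Ed d))

def T2 (d : ℕ) : ((Ed d × Ed d) →L[ℝ] ℝ) →L[ℝ] (Ed d →L[ℝ] ℝ) :=
  (ContinuousLinearMap.compL ℝ (Ed d) (Ed d × Ed d) ℝ).flip (inr ℝ (Ed d) (Ed d))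

def toDualSymmL (d : ℕ) : (Ed d →L[ℝ] ℝ) →ₗ[ℝ] Ed d where
  toFun L := (InnerProductSpace.toDual ℝ (Ed d)).symm L
  map_add' := by intros; simp
  map_smul' := by intros; simp

def toDualSymmCLM (d : ℕ) : (Ed d →L[ℝ] ℝ) →L[ℝ] Ed d :=
  LinearMap.toContinuousLinearMap (toDualSymmL d)

theorem toDualSymmCLM_apply (L : Ed d →L[ℝ] ℝ) (ξ : Ed d) :
    ⟪toDualSymmCLM d L, ξ⟫ = L ξ := by
  show ⟪(InnerProductSpace.toDual ℝ (Ed d)).symm L, ξ⟫ = L ξ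
  exact InnerProductSpace.toDual_symm_apply

theorem T1_apply (L : (Ed d × Ed d) →L[ℝ] ℝ) (ξ : Ed d) : T1 d L ξ = L (ξ, 0) := rfl

theorem T2_apply (L : (Ed d × Ed d) →L[ℝ] ℝ) (ξ : Ed d) : T2 d L ξ = L (0, ξ) := rfl

theorem D1_bij (hS : ContDiff ℝ 2 S) (hA : 0 < A)
    (htw : ∀ x y ξ : Ed d, iteratedFDeriv ℝ 2 S (x, y) ![(ξ, 0), (0, ξ)] ≤ -A * ‖ξ‖ ^ 2)
    (w : Ed d) : Function.Bijective (fun z => D1 S w z) := by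
  have hF2 : ContDiff ℝ 1 (fderiv ℝ S) := hS.fderiv_right (by norm_num)
  set F2 := fderiv ℝ S with hF2def
  set f1 : Ed d → Ed d := fun z => toDualSymmCLM d (T1 d (F2 (w, z))) with hf1
  have hc : ContDiff ℝ 1 f1 :=
    (toDualSymmCLM d).contDiff.comp ((T1 d).contDiff.comp
      (hF2.comp (contDiff_const.prodMk contDiff_id)))
  have hder : ∀ z ξ, ⟪fderiv ℝ f1 z ξ, ξ⟫ ≤ -A * ‖ξ‖ ^ 2 := by
    intro z ξ
    have h0 : HasFDerivAt (fun z : Ed d => (w, z)) (inr ℝ (Ed d) (Ed d)) z :=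
      hasFDerivAt_prodMk_right w z
    have h1 : HasFDerivAt F2 (fderiv ℝ F2 (w, z)) (w, z) :=
      (hF2.differentiable one_ne_zero _).hasFDerivAt
    have h2 : HasFDerivAt f1
        ((toDualSymmCLM d).comp ((T1 d).comp
          ((fderiv ℝ F2 (w, z)).comp (inr ℝ (Ed d) (Ed d))))) z :=
      (toDualSymmCLM d).hasFDerivAt.comp z (((T1 d).hasFDerivAt).comp z (h1.comp z h0))
    rw [h2.fderiv]
    have h3 : ⟪((toDualSymmCLM d).comp ((T1 d).comp
          ((fderiv ℝ F2 (w, z)).comp (inr ℝ (Ed d) (Ed d))))) ξ, ξ⟫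
        = (fderiv ℝ F2 (w, z)) (0, ξ) (ξ, 0) := by
      rw [ContinuousLinearMap.comp_apply, toDualSymmCLM_apply,
        ContinuousLinearMap.comp_apply, ContinuousLinearMap.comp_apply, T1_apply]
      simp
    rw [h3]
    have hsymm := second_derivative_symmetric (𝕜 := ℝ)
      (fun p => (hS.differentiable (by norm_num) p).hasFDerivAt) h1 ((0 : Ed d), ξ) (ξ, (0 : Ed d))
    rw [hsymm]
    have hit := iteratedFDeriv_two_apply (𝕜 := ℝ) S (w, z) ![(ξ, 0), (0, ξ)]
    have hm0 : (![(ξ, (0:Ed d)), ((0:Ed d), ξ)] : Fin 2 → Ed d × Ed d) 0 = (ξ, 0) := rfl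
    have hm1 : (![(ξ, (0:Ed d)), ((0:Ed d), ξ)] : Fin 2 → Ed d × Ed d) 1 = (0, ξ) := rfl
    simp only [Matrix.cons_val_zero, Matrix.cons_val_one, Matrix.head_cons] at hit
    rw [hF2def, ← hit]
    exact htw w z ξ
  have hb := bij_of_mono hA f1 hc hder
  have heq : (fun z => D1 S w z) = fun z => (InnerProductSpace.toDual ℝ (Ed d)) (f1 z) := by
    funext z
    rw [D1_eq hS w z]
    have : T1 d (F2 (w, z)) = (fderiv ℝ S (w, z)).comp (inl ℝ (Ed d) (Ed d)) := rfl
    rw [hf1]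
    show _ = (InnerProductSpace.toDual ℝ (Ed d))
      ((InnerProductSpace.toDual ℝ (Ed d)).symm (T1 d (F2 (w, z))))
    rw [(InnerProductSpace.toDual ℝ (Ed d)).apply_symm_apply, this]
  rw [heq]
  exact (InnerProductSpace.toDual ℝ (Ed d)).bijective.comp hb

theorem D2_bij (hS : ContDiff ℝ 2 S) (hA : 0 < A)
    (htw : ∀ x y ξ : Ed d, iteratedFDeriv ℝ 2 S (x, y) ![(ξ, 0), (0, ξ)] ≤ -A * ‖ξ‖ ^ 2)
    (y : Ed d) : Function.Bijective (fun z => D2 S z y) := by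
  have hF2 : ContDiff ℝ 1 (fderiv ℝ S) := hS.fderiv_right (by norm_num)
  set F2 := fderiv ℝ S with hF2def
  set f2 : Ed d → Ed d := fun z => toDualSymmCLM d (T2 d (F2 (z, y))) with hf2
  have hc : ContDiff ℝ 1 f2 :=
    (toDualSymmCLM d).contDiff.comp ((T2 d).contDiff.comp
      (hF2.comp (contDiff_id.prodMk contDiff_const)))
  have hder : ∀ z ξ, ⟪fderiv ℝ f2 z ξ, ξ⟫ ≤ -A * ‖ξ‖ ^ 2 := by
    intro z ξ
    have h0 : HasFDerivAt (fun z : Ed d => (z, y)) (inl ℝ (Ed d) (Ed d)) z :=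
      hasFDerivAt_prodMk_left z y
    have h1 : HasFDerivAt F2 (fderiv ℝ F2 (z, y)) (z, y) :=
      (hF2.differentiable one_ne_zero _).hasFDerivAt
    have h2 : HasFDerivAt f2
        ((toDualSymmCLM d).comp ((T2 d).comp
          ((fderiv ℝ F2 (z, y)).comp (inl ℝ (Ed d) (Ed d))))) z :=
      (toDualSymmCLM d).hasFDerivAt.comp z (((T2 d).hasFDerivAt).comp z (h1.comp z h0))
    rw [h2.fderiv]
    have h3 : ⟪((toDualSymmCLM d).comp ((T2 d).comp
          ((fderiv ℝ F2 (z, y)).comp (inl ℝ (Ed d) (Ed d))))) ξ, ξ⟫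
        = (fderiv ℝ F2 (z, y)) (ξ, 0) (0, ξ) := by
      rw [ContinuousLinearMap.comp_apply, toDualSymmCLM_apply,
        ContinuousLinearMap.comp_apply, ContinuousLinearMap.comp_apply, T2_apply]
      simp
    rw [h3]
    have hit := iteratedFDeriv_two_apply (𝕜 := ℝ) S (z, y) ![(ξ, 0), (0, ξ)]
    have hm0 : (![(ξ, (0:Ed d)), ((0:Ed d), ξ)] : Fin 2 → Ed d × Ed d) 0 = (ξ, 0) := rfl
    have hm1 : (![(ξ, (0:Ed d)), ((0:Ed d), ξ)] : Fin 2 → Ed d × Ed d) 1 = (0, ξ) := rfl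
    simp only [Matrix.cons_val_zero, Matrix.cons_val_one, Matrix.head_cons] at hit
    rw [hF2def, ← hit]
    exact htw z y ξ
  have hb := bij_of_mono hA f2 hc hder
  have heq : (fun z => D2 S z y) = fun z => (InnerProductSpace.toDual ℝ (Ed d)) (f2 z) := by
    funext z
    rw [D2_eq hS z y]
    rw [hf2]
    show _ = (InnerProductSpace.toDual ℝ (Ed d))
      ((InnerProductSpace.toDual ℝ (Ed d)).symm (T2 d (F2 (z, y))))
    rw [(InnerProductSpace.toDual ℝ (Ed d)).apply_symm_apply]
    rfl
  rw [heq]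
  exact (InnerProductSpace.toDual ℝ (Ed d)).bijective.comp hb

theorem exists_unique_extremal (hS : ContDiff ℝ 2 S) (hA : 0 < A)
    (htw : ∀ x y ξ : Ed d, iteratedFDeriv ℝ 2 S (x, y) ![(ξ, 0), (0, ξ)] ≤ -A * ‖ξ‖ ^ 2)
    (x y : Ed d) :
    ∃! u : ℤ → Ed d,
      (∀ n : ℤ, D2 S (u (n - 1)) (u n) + D1 S (u n) (u (n + 1)) = 0) ∧ u 0 = x ∧ u 1 = y := by
  have h1 := fun w => D1_bij hS hA htw w
  have h2 := fun yy => D2_bij hS hA htw yy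
  let E1 : Ed d → (Ed d ≃ (Ed d →L[ℝ] ℝ)) := fun w => Equiv.ofBijective _ (h1 w)
  let E2 : Ed d → (Ed d ≃ (Ed d →L[ℝ] ℝ)) := fun yy => Equiv.ofBijective _ (h2 yy)
  let nxt : Ed d → Ed d → Ed d := fun a b => (E1 b).symm (-(D2 S a b))
  let prv : Ed d → Ed d → Ed d := fun a b => (E2 a).symm (-(D1 S a b))
  have hnxt : ∀ a b, D1 S b (nxt a b) = -(D2 S a b) := fun a b =>
    (E1 b).apply_symm_apply (-(D2 S a b))
  have hprv : ∀ a b, D2 S (prv a b) a = -(D1 S a b) := fun a b =>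
    (E2 a).apply_symm_apply (-(D1 S a b))
  have hnxt_un : ∀ a b z, D2 S a b + D1 S b z = 0 → z = nxt a b := by
    intro a b z h
    apply (h1 b).1
    show D1 S b z = D1 S b (nxt a b)
    rw [hnxt a b]
    linear_combination (norm := abel) h
  have hprv_un : ∀ a b z, D2 S z a + D1 S a b = 0 → z = prv a b := by
    intro a b z h
    apply (h2 a).1
    show D2 S z a = D2 S (prv a b) a
    rw [hprv a b]
    linear_combination (norm := abel) h
  let e : Equiv.Perm (Ed d × Ed d) :=
    { toFun := fun p => (p.2, nxt p.1 p.2)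
      invFun := fun p => (prv p.1 p.2, p.1)
      left_inv := by
        rintro ⟨a, b⟩
        have hrel : D2 S a b + D1 S b (nxt a b) = 0 := by
          rw [hnxt a b]; abel
        have := hprv_un b (nxt a b) a hrel
        simp only [Prod.mk.injEq]
        exact ⟨this.symm, trivial⟩
      right_inv := by
        rintro ⟨a, b⟩
        have hrel : D2 S (prv a b) a + D1 S a b = 0 := by
          rw [hprv a b]; abel
        have := hnxt_un (prv a b) a b hrel
        simp only [Prod.mk.injEq]
        exact ⟨trivial, this.symm⟩ }
  have e_apply : ∀ p : Ed d × Ed d, e p = (p.2, nxt p.1 p.2) := fun p => rfl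
  have e_apply' : ∀ a b : Ed d, e (a, b) = (b, nxt a b) := fun a b => rfl
  let u : ℤ → Ed d := fun n => ((e ^ n) (x, y)).1
  have hstep : ∀ n : ℤ, (e ^ (n + 1)) (x, y) = e ((e ^ n) (x, y)) := by
    intro n
    have : e ^ (n + 1) = e * e ^ n := by rw [add_comm, zpow_add, zpow_one]
    rw [this]; rfl
  have hsnd : ∀ n : ℤ, u (n + 1) = ((e ^ n) (x, y)).2 := by
    intro n
    show ((e ^ (n + 1)) (x, y)).1 = _
    rw [hstep n, e_apply]
  have hpair : ∀ n : ℤ, (e ^ n) (x, y) = (u n, u (n + 1)) := by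
    intro n
    rw [hsnd n]
  refine ⟨u, ⟨?_, ?_, ?_⟩, ?_⟩
  · intro n
    have h0 : (e ^ n) (x, y) = e ((e ^ (n - 1)) (x, y)) := by
      have := hstep (n - 1); rw [sub_add_cancel] at this; exact this
    have hun1 : u (n + 1) = nxt (u (n - 1)) (u n) := by
      rw [hsnd n, h0, hpair (n - 1), e_apply]
      simp only
      congr 1
      rw [sub_add_cancel]
    rw [hun1, hnxt]
    abel
  · show ((e ^ (0 : ℤ)) (x, y)).1 = x
    rw [zpow_zero]; rfl
  · show ((e ^ (1 : ℤ)) (x, y)).1 = y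
    rw [zpow_one, e_apply]
  · intro u' ⟨hext', h0', h1'⟩
    have hnu : ∀ n : ℤ, nxt (u' n) (u' (n + 1)) = u' (n + 2) := by
      intro n
      have h := hext' (n + 1)
      rw [show n + 1 - 1 = n by ring, show n + 1 + 1 = n + 2 by ring] at h
      exact (hnxt_un _ _ _ h).symm
    have hq : ∀ n : ℤ, (e ^ n) (x, y) = (u' n, u' (n + 1)) := by
      intro n
      induction n using Int.induction_on with
      | zero => rw [zpow_zero]; simp [h0', h1', Equiv.Perm.one_apply]
      | succ i ih =>
        rw [hstep, ih, e_apply', hnu i, show (i : ℤ) + 1 + 1 = (i : ℤ) + 2 by ring]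
      | pred i ih =>
        apply e.injective
        have h3 := hstep (-(i : ℤ) - 1)
        rw [show -(i : ℤ) - 1 + 1 = -(i : ℤ) by ring] at h3
        rw [← h3, ih, e_apply', hnu (-(i : ℤ) - 1),
          show -(i : ℤ) - 1 + 1 = -(i : ℤ) by ring,
          show -(i : ℤ) - 1 + 2 = -(i : ℤ) + 1 by ring]
    funext n
    show u' n = ((e ^ n) (x, y)).1
    rw [hq n]

end AuxExtremal

/-- For every `(x,y) ∈ ℝ^d × ℝ^d` there exists a unique extremal sequence `(x_n)_{n∈ℤ}`
with `x_0 = x` and `x_1 = y`. -/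
theorem stmt_2 (d : ℕ) (hd : 1 ≤ d) (S : Ed d × Ed d → ℝ) (hS : IsGenFn S) :
    ∀ x y : Ed d, ∃! u : ℤ → Ed d, IsExtremal S u ∧ u 0 = x ∧ u 1 = y := by
  obtain ⟨hS2, -, A, hA, htw⟩ := hS
  intro x y
  exact exists_unique_extremal hS2 hA htw x y

end
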